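/- Let 𝔊₁, 𝔊₂ be crossed modules of groupoids with common object space X and M a crossing from 𝔊₁ to 𝔊₂ (data α₁,α₂,β₁,β₂). Form the bundle of groups H₁ ×_X H₂ = {(h₁,h₂) : s(h₁) = s(h₂)} with the M-action (h₁,h₂)^m = (c₁(α₂(m))(h₁), c₂(β₂(m))(h₂)) and the morphism α₁·β₁: (h₁,h₂) ↦ α₁(h₁)β₁(h₂). Then (M, H₁ ×_X H₂, α₁·β₁, this action) is a crossed module of groupoids, and the pairs (pr₁, α₂): 𝔊' → 𝔊₁ and (pr₂, β₂): 𝔊' → 𝔊₂ are strict morphisms of crossed modules, where 𝔊' denotes this crossed module. -/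

import Mathlib

/-- A groupoid with object space `X`.  Composition is written in "paper
order": `comp g h` is defined when the source of `g` equals the target of
`h`; here `Hom x y` is the set of arrows with source `x` and target `y`, so
for `g : Hom y z` and `h : Hom x y` we have `comp g h : Hom x z`
("first `h`, then `g`"). -/
structure GpdOver (X : Type) where
  Hom : X → X → Type
  id : ∀ x, Hom x x
  comp : ∀ {x y z : X}, Hom y z → Hom x y → Hom x z
  inv : ∀ {x y : X}, Hom x y → Hom y x
  comp_assoc : ∀ {x y z w : X} (g : Hom z w) (h : Hom y z) (k : Hom x y),
    comp (comp g h) k = comp g (comp h k)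
  id_comp : ∀ {x y : X} (g : Hom x y), comp (id y) g = g
  comp_id : ∀ {x y : X} (g : Hom x y), comp g (id x) = g
  comp_inv : ∀ {x y : X} (g : Hom x y), comp g (inv g) = id y
  inv_comp : ∀ {x y : X} (g : Hom x y), comp (inv g) g = id x

/-- A crossed module of groupoids over the object space `X`: a groupoid `G`
over `X`, a bundle of groups `H` over `X`, a morphism `δ : H → G` over the
identity of `X` (landing in loops), and an action `act` of `G` on `H` by
group isomorphisms (`act g : H y → H x` for `g : Hom x y`), satisfying
`δ (act g a) = g⁻¹ · δ a · g` and `act (δ a) b = a⁻¹ b a`. -/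
structure XMod (X : Type) where
  G : GpdOver X
  H : X → Type
  mul : ∀ {x : X}, H x → H x → H x
  one : ∀ x : X, H x
  hinv : ∀ {x : X}, H x → H x
  mul_assoc : ∀ {x : X} (a b c : H x), mul (mul a b) c = mul a (mul b c)
  one_mul : ∀ {x : X} (a : H x), mul (one x) a = a
  mul_one : ∀ {x : X} (a : H x), mul a (one x) = a
  inv_mul : ∀ {x : X} (a : H x), mul (hinv a) a = one x
  mul_inv : ∀ {x : X} (a : H x), mul a (hinv a) = one x
  δ : ∀ {x : X}, H x → G.Hom x x
  δ_mul : ∀ {x : X} (a b : H x), δ (mul a b) = G.comp (δ a) (δ b)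
  δ_one : ∀ x : X, δ (one x) = G.id x
  act : ∀ {x y : X}, G.Hom x y → H y → H x
  act_id : ∀ {x : X} (a : H x), act (G.id x) a = a
  act_comp : ∀ {x y z : X} (g : G.Hom y z) (h : G.Hom x y) (a : H z),
    act (G.comp g h) a = act h (act g a)
  act_mul : ∀ {x y : X} (g : G.Hom x y) (a b : H y),
    act g (mul a b) = mul (act g a) (act g b)
  act_one : ∀ {x y : X} (g : G.Hom x y), act g (one y) = one x
  δ_act : ∀ {x y : X} (g : G.Hom x y) (a : H y),
    δ (act g a) = G.comp (G.inv g) (G.comp (δ a) g)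
  act_δ : ∀ {x : X} (a b : H x), act (δ a) b = mul (hinv a) (mul b a)

/-- A strict morphism of groupoids over the same object space `X`. -/
structure GpdHom {X : Type} (M N : GpdOver X) where
  map : ∀ {x y : X}, M.Hom x y → N.Hom x y
  map_comp : ∀ {x y z : X} (g : M.Hom y z) (h : M.Hom x y),
    map (M.comp g h) = N.comp (map g) (map h)
  map_id : ∀ x : X, map (M.id x) = N.id x
  map_inv : ∀ {x y : X} (g : M.Hom x y), map (M.inv g) = N.inv (map g)

/-- A strict morphism of crossed modules of groupoids over the same object
space `X`. -/
structure XModHom {X : Type} (A B : XMod X) where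
  mapH : ∀ {x : X}, A.H x → B.H x
  mapG : ∀ {x y : X}, A.G.Hom x y → B.G.Hom x y
  mapH_mul : ∀ {x : X} (a b : A.H x), mapH (A.mul a b) = B.mul (mapH a) (mapH b)
  mapG_comp : ∀ {x y z : X} (g : A.G.Hom y z) (h : A.G.Hom x y),
    mapG (A.G.comp g h) = B.G.comp (mapG g) (mapG h)
  mapG_id : ∀ x : X, mapG (A.G.id x) = B.G.id x
  comm : ∀ {x : X} (a : A.H x), B.δ (mapH a) = mapG (A.δ a)
  equivar : ∀ {x y : X} (g : A.G.Hom x y) (a : A.H y),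
    mapH (A.act g a) = B.act (mapG g) (mapH a)

/-- A crossing from the crossed module `A` to the crossed module `B`
(both over the same object space `X`, with trivial anchor maps):
a groupoid `M` over `X` together with morphisms `α₁ : H₁ → M`,
`α₂ : M → G₁`, `β₁ : H₂ → M`, `β₂ : M → G₂` (all the identity on objects),
such that `α₂∘α₁ = ∂₁`, `β₂∘β₁ = ∂₂`, the diagonals are complexes,
`H₂ → M → G₁` is an extension of groupoids, and the conjugation identities
hold. -/
structure Crossing {X : Type} (A B : XMod X) where
  M : GpdOver X
  α₁ : ∀ {x : X}, A.H x → M.Hom x x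
  α₂ : GpdHom M A.G
  β₁ : ∀ {x : X}, B.H x → M.Hom x x
  β₂ : GpdHom M B.G
  α₁_mul : ∀ {x : X} (a b : A.H x), α₁ (A.mul a b) = M.comp (α₁ a) (α₁ b)
  β₁_mul : ∀ {x : X} (a b : B.H x), β₁ (B.mul a b) = M.comp (β₁ a) (β₁ b)
  tri₁ : ∀ {x : X} (a : A.H x), α₂.map (α₁ a) = A.δ a
  tri₂ : ∀ {x : X} (b : B.H x), β₂.map (β₁ b) = B.δ b
  diag₁ : ∀ {x : X} (a : A.H x), β₂.map (α₁ a) = B.G.id x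
  diag₂ : ∀ {x : X} (b : B.H x), α₂.map (β₁ b) = A.G.id x
  β₁_inj : ∀ {x : X} (b b' : B.H x), β₁ b = β₁ b' → b = b'
  α₂_surj : ∀ {x y : X} (g : A.G.Hom x y), ∃ m : M.Hom x y, α₂.map m = g
  exact₁ : ∀ {x : X} (m : M.Hom x x), α₂.map m = A.G.id x → ∃ b : B.H x, β₁ b = m
  conj₁ : ∀ {x y : X} (m : M.Hom x y) (a : A.H y),
    α₁ (A.act (α₂.map m) a) = M.comp (M.inv m) (M.comp (α₁ a) m)
  conj₂ : ∀ {x y : X} (m : M.Hom x y) (b : B.H y),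
    β₁ (B.act (β₂.map m) b) = M.comp (M.inv m) (M.comp (β₁ b) m)

/-- A crossed extension of `A` and `B`: a crossing for which the other
diagonal `H₁ → M → G₂` is also an extension of groupoids. -/
structure CrossedExt {X : Type} (A B : XMod X) extends Crossing A B where
  α₁_inj : ∀ {x : X} (a a' : A.H x), α₁ a = α₁ a' → a = a'
  β₂_surj : ∀ {x y : X} (g : B.G.Hom x y), ∃ m : M.Hom x y, β₂.map m = g
  exact₂ : ∀ {x : X} (m : M.Hom x x), β₂.map m = B.G.id x → ∃ a : A.H x, α₁ a = m

section CrossingXMod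

variable {X : Type}

/-- The fiber of the bundle `H₁ ×_X H₂` at `x`. -/
def PH (A B : XMod X) (x : X) : Type := A.H x × B.H x

/-- Componentwise multiplication on `H₁ ×_X H₂`. -/
def pMul (A B : XMod X) {x : X} (p q : PH A B x) : PH A B x := (A.mul p.1 q.1, B.mul p.2 q.2)

/-- Componentwise inversion on `H₁ ×_X H₂`. -/
def pInv (A B : XMod X) {x : X} (p : PH A B x) : PH A B x := (A.hinv p.1, B.hinv p.2)

/-- The morphism `α₁·β₁ : H₁ ×_X H₂ → M`, `(h₁, h₂) ↦ α₁(h₁)·β₁(h₂)`. -/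
def pδ {A B : XMod X} (C : Crossing A B) {x : X} (p : PH A B x) : C.M.Hom x x :=
  C.M.comp (C.α₁ p.1) (C.β₁ p.2)

/-- The action of `M` on `H₁ ×_X H₂`:
`(h₁, h₂)^m = (c₁(α₂ m)(h₁), c₂(β₂ m)(h₂))`. -/
def pAct {A B : XMod X} (C : Crossing A B) {x y : X} (m : C.M.Hom x y) (p : PH A B y) : PH A B x :=
  (A.act (C.α₂.map m) p.1, B.act (C.β₂.map m) p.2)

end CrossingXMod

/-- Images of `α₁` and `β₁` commute. -/
lemma Crossing.comm_images {X : Type} {A B : XMod X} (C : Crossing A B)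
    {x : X} (a : A.H x) (b : B.H x) :
    C.M.comp (C.α₁ a) (C.β₁ b) = C.M.comp (C.β₁ b) (C.α₁ a) := by
  have h := C.conj₂ (C.α₁ a) b
  rw [C.diag₁, B.act_id] at h
  calc C.M.comp (C.α₁ a) (C.β₁ b)
      = C.M.comp (C.α₁ a) (C.M.comp (C.M.inv (C.α₁ a))
          (C.M.comp (C.β₁ b) (C.α₁ a))) := by rw [← h]
    _ = C.M.comp (C.M.comp (C.α₁ a) (C.M.inv (C.α₁ a)))
          (C.M.comp (C.β₁ b) (C.α₁ a)) := by rw [C.M.comp_assoc]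
    _ = C.M.comp (C.β₁ b) (C.α₁ a) := by rw [C.M.comp_inv, C.M.id_comp]

/-- Let `C = (M, α₁, α₂, β₁, β₂)` be a crossing from `𝔊₁`
to `𝔊₂` over `X`.  Then the bundle of groups `H₁ ×_X H₂` with the
`M`-action `(h₁,h₂)^m = (c₁(α₂ m)(h₁), c₂(β₂ m)(h₂))` and the morphism
`α₁·β₁ : (h₁,h₂) ↦ α₁(h₁)·β₁(h₂)` form a crossed module of groupoids
`𝔊' = (H₁ ×_X H₂ → M)`, and the pairs `(pr₁, α₂) : 𝔊' → 𝔊₁` and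
`(pr₂, β₂) : 𝔊' → 𝔊₂` are strict morphisms of crossed modules. -/
theorem crossing_induced_crossed_module {X : Type} (A B : XMod X)
    (C : Crossing A B) :
    -- `α₁·β₁` is a morphism of group bundles into the loops of `M`
    (∀ {x : X} (p q : PH A B x),
        pδ C (pMul A B p q) = C.M.comp (pδ C p) (pδ C q)) ∧
    -- `pAct` is a groupoid action by group automorphisms
    (∀ {x : X} (p : PH A B x), pAct C (C.M.id x) p = p) ∧
    (∀ {x y z : X} (m : C.M.Hom y z) (n : C.M.Hom x y) (p : PH A B z),
        pAct C (C.M.comp m n) p = pAct C n (pAct C m p)) ∧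
    (∀ {x y : X} (m : C.M.Hom x y) (p q : PH A B y),
        pAct C m (pMul A B p q) = pMul A B (pAct C m p) (pAct C m q)) ∧
    -- first crossed module identity
    (∀ {x y : X} (m : C.M.Hom x y) (p : PH A B y),
        pδ C (pAct C m p) = C.M.comp (C.M.inv m) (C.M.comp (pδ C p) m)) ∧
    -- second (Peiffer) identity
    (∀ {x : X} (p q : PH A B x),
        pAct C (pδ C p) q = pMul A B (pInv A B p) (pMul A B q p)) ∧
    -- `(pr₁, α₂)` is a strict morphism of crossed modules `𝔊' → 𝔊₁`
    (∀ {x : X} (p q : PH A B x),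
        (pMul A B p q).1 = A.mul p.1 q.1) ∧
    (∀ {x : X} (p : PH A B x), A.δ p.1 = C.α₂.map (pδ C p)) ∧
    (∀ {x y : X} (m : C.M.Hom x y) (p : PH A B y),
        (pAct C m p).1 = A.act (C.α₂.map m) p.1) ∧
    -- `(pr₂, β₂)` is a strict morphism of crossed modules `𝔊' → 𝔊₂`
    (∀ {x : X} (p q : PH A B x),
        (pMul A B p q).2 = B.mul p.2 q.2) ∧
    (∀ {x : X} (p : PH A B x), B.δ p.2 = C.β₂.map (pδ C p)) ∧
    (∀ {x y : X} (m : C.M.Hom x y) (p : PH A B y),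
        (pAct C m p).2 = B.act (C.β₂.map m) p.2) := by
  refine ⟨?_, ?_, ?_, ?_, ?_, ?_, ?_, ?_, ?_, ?_, ?_, ?_⟩
  · -- δ multiplicative
    intro x p q
    simp only [pδ, pMul, C.α₁_mul, C.β₁_mul]
    calc C.M.comp (C.M.comp (C.α₁ p.1) (C.α₁ q.1))
          (C.M.comp (C.β₁ p.2) (C.β₁ q.2))
        = C.M.comp (C.α₁ p.1) (C.M.comp (C.M.comp (C.α₁ q.1) (C.β₁ p.2))
            (C.β₁ q.2)) := by rw [C.M.comp_assoc, C.M.comp_assoc]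
      _ = C.M.comp (C.α₁ p.1) (C.M.comp (C.M.comp (C.β₁ p.2) (C.α₁ q.1))
            (C.β₁ q.2)) := by rw [C.comm_images]
      _ = C.M.comp (C.M.comp (C.α₁ p.1) (C.β₁ p.2))
            (C.M.comp (C.α₁ q.1) (C.β₁ q.2)) := by
              rw [C.M.comp_assoc, C.M.comp_assoc]
  · intro x p
    simp [pAct, C.α₂.map_id, C.β₂.map_id, A.act_id, B.act_id]
    rfl
  · intro x y z m n p
    simp [pAct, C.α₂.map_comp, C.β₂.map_comp, A.act_comp, B.act_comp]
    rfl
  · intro x y m p q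
    simp [pAct, pMul, A.act_mul, B.act_mul]
    rfl
  · -- first crossed module identity
    intro x y m p
    simp only [pδ, pAct, C.conj₁, C.conj₂]
    calc C.M.comp (C.M.comp (C.M.inv m) (C.M.comp (C.α₁ p.1) m))
          (C.M.comp (C.M.inv m) (C.M.comp (C.β₁ p.2) m))
        = C.M.comp (C.M.inv m) (C.M.comp (C.α₁ p.1)
            (C.M.comp (C.M.comp m (C.M.inv m)) (C.M.comp (C.β₁ p.2) m))) := by
            simp [C.M.comp_assoc]
      _ = C.M.comp (C.M.inv m) (C.M.comp (C.α₁ p.1)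
            (C.M.comp (C.β₁ p.2) m)) := by rw [C.M.comp_inv, C.M.id_comp]
      _ = C.M.comp (C.M.inv m) (C.M.comp (C.M.comp (C.α₁ p.1) (C.β₁ p.2)) m) := by
            rw [C.M.comp_assoc]
  · -- Peiffer identity
    intro x p q
    have h1 : C.α₂.map (pδ C p) = A.δ p.1 := by
      simp [pδ, C.α₂.map_comp, C.tri₁, C.diag₂, A.G.comp_id]
    have h2 : C.β₂.map (pδ C p) = B.δ p.2 := by
      simp [pδ, C.β₂.map_comp, C.tri₂, C.diag₁, B.G.id_comp]
    simp [pAct, pMul, pInv, h1, h2, A.act_δ, B.act_δ]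
    rfl
  · intro x p q; rfl
  · intro x p
    simp [pδ, C.α₂.map_comp, C.tri₁, C.diag₂, A.G.comp_id]
  · intro x y m p; rfl
  · intro x p q; rfl
  · intro x p
    simp [pδ, C.β₂.map_comp, C.tri₂, C.diag₁, B.G.id_comp]
  · intro x y m p; rfl
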